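/- Let n ≥ 1, let q_1, …, q_n be positive integers with ∑_{i=1}^n q_i = 2Q, let k be an integer with 1 ≤ k ≤ n, and let N be an integer with 2^{N−1} > 2^n·Q + k. Define ℓ_i = 2^n·q_i + 1 for i = 1, …, n, L = ∑_{i=1}^n ℓ_i = 2^{n+1}Q + n, and the n+2 intervals I_i = [∑_{j<i} ℓ_j, ∑_{j≤i} ℓ_j) for i = 1, …, n, I_{n+1} = [L, L + 2^N − 2^n·Q − k), and I_{n+2} = [0, 2^N + 2^n·Q + n − k). Let f : ℝ → ℝ be given by f(x) = 0 if x = 2^m for some natural number m, and f(x) = x otherwise. If there exists a subset J ⊆ {1, …, n} with |J| = k and ∑_{j∈J} q_j = Q, then there exists an ordering of I_1, …, I_{n+2} whose cost is at most 2^n·Q + n − k. -/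

import Mathlib

open MeasureTheory

/-- The cost of an ordering `α` of the sets `S 1, …, S n`: sum over positions `k` of
`f` applied to the Lebesgue measure of the exposed part of the `k`-th set. -/
noncomputable def exposedCost {n : ℕ} (S : Fin n → Set ℝ) (f : ℝ → ℝ)
    (α : Equiv.Perm (Fin n)) : ℝ :=
  ∑ k : Fin n, f ((volume (S (α k) \ ⋃ (j : Fin n) (_ : j < k), S (α j))).toReal)

/-- Partial sums of interval lengths. -/
def csum (ℓ : ℕ → ℕ) (i : ℕ) : ℕ := ∑ j ∈ Finset.range i, ℓ j

/-- YES-instance direction of the PARTITION reduction: if there is an index set `J` of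
cardinality `k` with `∑_{j ∈ J} q_j = Q`, then some ordering of the `n + 2` constructed
intervals (the `n` element-intervals, the dummy-interval and the main-interval) has cost
at most `2^n·Q + n - k`, where `f` vanishes on powers of two and is the identity
elsewhere. -/
theorem stmt_13 (n Q k N : ℕ) (hn : 1 ≤ n)
    (q : ℕ → ℕ) (hq : ∀ i < n, 0 < q i)
    (hQ : ∑ i ∈ Finset.range n, q i = 2 * Q)
    (hk1 : 1 ≤ k) (hkn : k ≤ n)
    (hN : 2 ^ n * Q + k < 2 ^ (N - 1))
    (ℓ : ℕ → ℕ) (hℓ : ∀ i, ℓ i = 2 ^ n * q i + 1)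
    (L : ℕ) (hL : L = ∑ i ∈ Finset.range n, ℓ i)
    (S : Fin (n + 2) → Set ℝ)
    (hSelem : ∀ i : Fin (n + 2), (i : ℕ) < n →
      S i = Set.Ico ((∑ j ∈ Finset.range (i : ℕ), ℓ j : ℕ) : ℝ)
                    ((∑ j ∈ Finset.range ((i : ℕ) + 1), ℓ j : ℕ) : ℝ))
    (hSdummy : ∀ i : Fin (n + 2), (i : ℕ) = n →
      S i = Set.Ico (L : ℝ) ((L : ℝ) + ((2 : ℝ) ^ N - 2 ^ n * Q - k)))
    (hSmain : ∀ i : Fin (n + 2), (i : ℕ) = n + 1 →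
      S i = Set.Ico (0 : ℝ) ((2 : ℝ) ^ N + 2 ^ n * Q + n - k))
    (f : ℝ → ℝ)
    (hfpow : ∀ x : ℝ, (∃ m : ℕ, x = 2 ^ m) → f x = 0)
    (hfother : ∀ x : ℝ, (¬ ∃ m : ℕ, x = 2 ^ m) → f x = x)
    (hJ : ∃ J : Finset ℕ, J ⊆ Finset.range n ∧ J.card = k ∧ ∑ j ∈ J, q j = Q) :
    ∃ α : Equiv.Perm (Fin (n + 2)),
      exposedCost S f α ≤ (2 : ℝ) ^ n * Q + n - k := by
  classical
  obtain ⟨J, hJsub, hJcard, hJsum⟩ := hJ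
  -- basic arithmetic
  have hN1 : 1 ≤ N := by
    by_contra hcon
    push_neg at hcon
    have h0 : N - 1 = 0 := by omega
    rw [h0, pow_zero] at hN
    omega
  have hNk : 2 ^ n * Q + k ≤ 2 ^ N :=
    le_trans (le_of_lt hN) (Nat.pow_le_pow_right (by norm_num) (Nat.sub_le _ _))
  set m := n - k with hmdef
  have hm2 : m < n + 2 := by omega
  -- sums
  have hsumJ : ∑ j ∈ J, ℓ j = 2 ^ n * Q + k := by
    calc ∑ j ∈ J, ℓ j = ∑ j ∈ J, (2 ^ n * q j + 1) :=
          Finset.sum_congr rfl (fun j _ => hℓ j)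
      _ = 2 ^ n * ∑ j ∈ J, q j + J.card := by
          rw [Finset.sum_add_distrib, Finset.sum_const, Finset.mul_sum, smul_eq_mul, mul_one]
      _ = 2 ^ n * Q + k := by rw [hJsum, hJcard]
  have hsumAll : ∑ j ∈ Finset.range n, ℓ j = 2 ^ n * (2 * Q) + n := by
    calc ∑ j ∈ Finset.range n, ℓ j = ∑ j ∈ Finset.range n, (2 ^ n * q j + 1) :=
          Finset.sum_congr rfl (fun j _ => hℓ j)
      _ = 2 ^ n * ∑ j ∈ Finset.range n, q j + (Finset.range n).card := by
          rw [Finset.sum_add_distrib, Finset.sum_const, Finset.mul_sum, smul_eq_mul, mul_one]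
      _ = 2 ^ n * (2 * Q) + n := by rw [hQ, Finset.card_range]
  set C := Finset.range n \ J with hCdef
  have hCsub : C ⊆ Finset.range n := Finset.sdiff_subset
  have hCcard : C.card = m := by
    rw [hCdef, Finset.card_sdiff_of_subset hJsub, Finset.card_range, hJcard]
  have hsumC : ∑ j ∈ C, ℓ j = 2 ^ n * Q + m := by
    have h2 : ∑ j ∈ C, ℓ j + ∑ j ∈ J, ℓ j = ∑ j ∈ Finset.range n, ℓ j :=
      Finset.sum_sdiff hJsub
    have h3 : 2 ^ n * (2 * Q) = 2 ^ n * Q + 2 ^ n * Q := by ring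
    omega
  have hCltn : ∀ x ∈ C, x < n := fun x hx => Finset.mem_range.1 (hCsub hx)
  -- partial sums
  have hcsucc : ∀ i, csum ℓ (i + 1) = csum ℓ i + ℓ i := fun i => Finset.sum_range_succ ℓ i
  have hcmono : ∀ a b, a ≤ b → csum ℓ a ≤ csum ℓ b := fun a b h =>
    Finset.sum_le_sum_of_subset (Finset.range_subset_range.2 h)
  have hcL : csum ℓ n = L := hL.symm
  have hS' : ∀ i : Fin (n + 2), (i : ℕ) < n →
      S i = Set.Ico ((csum ℓ (i : ℕ) : ℕ) : ℝ) ((csum ℓ ((i : ℕ) + 1) : ℕ) : ℝ) :=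
    fun i h => hSelem i h
  set M : ℝ := (2 : ℝ) ^ N + 2 ^ n * Q + ↑n - ↑k with hMdef
  have hAkR : (2 : ℝ) ^ n * Q + k ≤ (2 : ℝ) ^ N := by exact_mod_cast hNk
  have hLnat : L = 2 ^ n * (2 * Q) + n := by rw [hL, hsumAll]
  have hLR : (L : ℝ) = 2 * ((2 : ℝ) ^ n * Q) + n := by rw [hLnat]; push_cast; ring
  have hLM : (L : ℝ) ≤ M := by rw [hMdef, hLR]; linarith
  -- all sets are contained in the main interval
  have hSsub : ∀ t : Fin (n + 2), S t ⊆ Set.Ico (0 : ℝ) M := by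
    intro t
    by_cases h1 : (t : ℕ) < n
    · rw [hS' t h1]
      apply Set.Ico_subset_Ico (by positivity)
      have h2 : csum ℓ ((t : ℕ) + 1) ≤ L := hcL ▸ hcmono _ _ (by omega)
      calc ((csum ℓ ((t : ℕ) + 1) : ℕ) : ℝ) ≤ (L : ℝ) := by exact_mod_cast h2
        _ ≤ M := hLM
    · by_cases h2 : (t : ℕ) = n
      · rw [hSdummy t h2]
        have h3 : (L : ℝ) + ((2 : ℝ) ^ N - 2 ^ n * Q - ↑k) = M := by
          rw [hMdef, hLR]; ring
        rw [h3]
        exact Set.Ico_subset_Ico (by positivity) le_rfl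
      · have h3 : (t : ℕ) = n + 1 := by omega
        rw [hSmain t h3]
  -- construction of the permutation
  let eC := C.orderIsoOfFin hCcard
  let σ : Fin (n + 2) → Fin (n + 2) := fun i =>
    if h : (i : ℕ) < m then
      ⟨(eC ⟨(i : ℕ), h⟩ : ℕ), by have := hCltn _ (eC ⟨(i : ℕ), h⟩).2; omega⟩
    else ⟨n + 1, by omega⟩
  have hσlt : ∀ (i : Fin (n + 2)) (h : (i : ℕ) < m),
      (σ i : ℕ) = (eC ⟨(i : ℕ), h⟩ : ℕ) := by
    intro i h
    simp only [σ, dif_pos h]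
  have hσm : ∀ i : Fin (n + 2), ¬ (i : ℕ) < m → (σ i : ℕ) = n + 1 := by
    intro i h
    simp only [σ, dif_neg h]
  have hσinj : ∀ i j : Fin (n + 2), (i : ℕ) ≤ m → (j : ℕ) ≤ m → σ i = σ j → i = j := by
    intro i j hi hj hij
    have hval : (σ i : ℕ) = (σ j : ℕ) := congrArg Fin.val hij
    by_cases h1 : (i : ℕ) < m <;> by_cases h2 : (j : ℕ) < m
    · rw [hσlt i h1, hσlt j h2] at hval
      have h3 : (⟨(i : ℕ), h1⟩ : Fin m) = ⟨(j : ℕ), h2⟩ :=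
        eC.injective (Subtype.ext hval)
      have h4 := congrArg Fin.val h3
      exact Fin.ext h4
    · exfalso
      rw [hσlt i h1, hσm j h2] at hval
      have := hCltn _ (eC ⟨(i : ℕ), h1⟩).2
      omega
    · exfalso
      rw [hσm i h1, hσlt j h2] at hval
      have := hCltn _ (eC ⟨(j : ℕ), h2⟩).2
      omega
    · exact Fin.ext (by omega)
  let p : Fin (n + 2) → Prop := fun i => (i : ℕ) ≤ m
  let T : Finset (Fin (n + 2)) := (Finset.univ.filter p).image σ
  have hmemT : ∀ i : Fin (n + 2), p i → σ i ∈ T := fun i hi =>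
    Finset.mem_image.2 ⟨i, Finset.mem_filter.2 ⟨Finset.mem_univ _, hi⟩, rfl⟩
  let g : {i : Fin (n + 2) // p i} → {y : Fin (n + 2) // y ∈ T} := fun x =>
    ⟨σ x, hmemT x x.2⟩
  have hgbij : Function.Bijective g := by
    constructor
    · intro a b hab
      exact Subtype.ext (hσinj _ _ a.2 b.2 (congrArg Subtype.val hab))
    · rintro ⟨y, hy⟩
      obtain ⟨i, hi, rfl⟩ := Finset.mem_image.1 hy
      exact ⟨⟨i, (Finset.mem_filter.1 hi).2⟩, rfl⟩
  let e1 : {i : Fin (n + 2) // p i} ≃ {y : Fin (n + 2) // y ∈ T} := Equiv.ofBijective g hgbij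
  have hcard2 : Fintype.card {i : Fin (n + 2) // ¬ p i} =
      Fintype.card {y : Fin (n + 2) // ¬ y ∈ T} := by
    rw [Fintype.card_subtype_compl, Fintype.card_subtype_compl, Fintype.card_congr e1]
  let e2 : {i : Fin (n + 2) // ¬ p i} ≃ {y : Fin (n + 2) // ¬ y ∈ T} :=
    Fintype.equivOfCardEq hcard2
  let α : Equiv.Perm (Fin (n + 2)) :=
    (Equiv.sumCompl p).symm.trans ((e1.sumCongr e2).trans (Equiv.sumCompl (fun y => y ∈ T)))
  have hαlow : ∀ i : Fin (n + 2), (i : ℕ) ≤ m → α i = σ i := by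
    intro i hi
    show (Equiv.sumCompl (fun y => y ∈ T)) ((e1.sumCongr e2) ((Equiv.sumCompl p).symm i)) = σ i
    rw [Equiv.sumCompl_symm_apply_of_pos (p := p) hi]
    simp [e1, g]
  refine ⟨α, ?_⟩
  -- the position of the main interval
  set im : Fin (n + 2) := ⟨m, hm2⟩ with himdef
  have hαim : ((α im : Fin (n + 2)) : ℕ) = n + 1 := by
    rw [hαlow im (le_of_eq rfl)]
    exact hσm im (lt_irrefl m)
  have hSαim : S (α im) = Set.Ico (0 : ℝ) M := hSmain _ hαim
  -- values at low positions lie in C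
  have hαv : ∀ j : Fin (n + 2), (j : ℕ) < m → ((α j : Fin (n + 2)) : ℕ) ∈ C := by
    intro j hj
    rw [hαlow j hj.le, hσlt j hj]
    exact (eC ⟨(j : ℕ), hj⟩).2
  have hSα : ∀ j : Fin (n + 2), (j : ℕ) < m →
      S (α j) = Set.Ico ((csum ℓ ((α j : Fin (n + 2)) : ℕ) : ℕ) : ℝ)
        ((csum ℓ (((α j : Fin (n + 2)) : ℕ) + 1) : ℕ) : ℝ) :=
    fun j hj => hS' _ (hCltn _ (hαv j hj))
  set P : Finset (Fin (n + 2)) := Finset.univ.filter (fun j => (j : ℕ) < m) with hPdef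
  have hPmem : ∀ j : Fin (n + 2), j ∈ P ↔ (j : ℕ) < m := by
    intro j; simp [hPdef]
  -- sum of the lengths of the low-position intervals
  have hPsum : ∑ j ∈ P, ℓ ((α j : Fin (n + 2)) : ℕ) = ∑ v ∈ C, ℓ v := by
    apply Finset.sum_nbij' (i := fun j : Fin (n + 2) => ((α j : Fin (n + 2)) : ℕ))
      (j := fun v : ℕ => if hv : v ∈ C then
        (⟨(eC.symm ⟨v, hv⟩ : ℕ), by have := (eC.symm ⟨v, hv⟩).isLt; omega⟩ : Fin (n + 2))
      else ⟨0, by omega⟩)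
    · intro a ha
      exact hαv a ((hPmem a).1 ha)
    · intro v hv
      rw [dif_pos hv, hPmem]
      exact (eC.symm ⟨v, hv⟩).isLt
    · intro a ha
      have ha' : (a : ℕ) < m := (hPmem a).1 ha
      have hmem : ((α a : Fin (n + 2)) : ℕ) ∈ C := hαv a ha'
      rw [dif_pos hmem]
      have hval : (⟨((α a : Fin (n + 2)) : ℕ), hmem⟩ : {x // x ∈ C}) = eC ⟨(a : ℕ), ha'⟩ := by
        apply Subtype.ext
        simp only
        rw [hαlow a ha'.le, hσlt a ha']
      simp only [hval, OrderIso.symm_apply_apply]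
    · intro v hv
      rw [dif_pos hv]
      have h1 : ((⟨(eC.symm ⟨v, hv⟩ : ℕ), by have := (eC.symm ⟨v, hv⟩).isLt; omega⟩ :
          Fin (n + 2)) : ℕ) < m := (eC.symm ⟨v, hv⟩).isLt
      rw [hαlow _ h1.le, hσlt _ h1]
      have h2 : (⟨((⟨(eC.symm ⟨v, hv⟩ : ℕ), by have := (eC.symm ⟨v, hv⟩).isLt; omega⟩ :
          Fin (n + 2)) : ℕ), h1⟩ : Fin m) = eC.symm ⟨v, hv⟩ := Fin.ext rfl
      rw [h2, OrderIso.apply_symm_apply]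
    · intro a _
      rfl
  -- f vanishes at 0
  have hf0 : f 0 = 0 := by
    rw [hfother 0]
    rintro ⟨m', hm'⟩
    have : (0 : ℝ) < 2 ^ m' := by positivity
    linarith [hm' ▸ this]
  -- termwise bound
  have hbound : ∀ i : Fin (n + 2),
      f ((volume (S (α i) \ ⋃ (j : Fin (n + 2)) (_ : j < i), S (α j))).toReal) ≤
        (if (i : ℕ) < m then ((ℓ ((α i : Fin (n + 2)) : ℕ) : ℕ) : ℝ) else 0) := by
    intro i
    rcases lt_trichotomy ((i : ℕ)) m with h | h | h
    · rw [if_pos h]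
      have hSi := hSα i h
      have hfin : volume (S (α i)) ≠ ⊤ := by
        rw [hSi, Real.volume_Ico]; exact ENNReal.ofReal_ne_top
      have h1 : volume (S (α i) \ ⋃ (j : Fin (n + 2)) (_ : j < i), S (α j)) ≤
          volume (S (α i)) := measure_mono Set.diff_subset
      have h2 := ENNReal.toReal_mono hfin h1
      have h3 : (volume (S (α i))).toReal = ((ℓ ((α i : Fin (n + 2)) : ℕ) : ℕ) : ℝ) := by
        rw [hSi, Real.volume_Ico, ENNReal.toReal_ofReal]
        · have := hcsucc ((α i : Fin (n + 2)) : ℕ)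
          push_cast [this]; ring
        · have := hcmono ((α i : Fin (n + 2)) : ℕ) (((α i : Fin (n + 2)) : ℕ) + 1) (by omega)
          have h4 : ((csum ℓ ((α i : Fin (n + 2)) : ℕ) : ℕ) : ℝ) ≤
              ((csum ℓ (((α i : Fin (n + 2)) : ℕ) + 1) : ℕ) : ℝ) := by exact_mod_cast this
          linarith
      set x := (volume (S (α i) \ ⋃ (j : Fin (n + 2)) (_ : j < i), S (α j))).toReal with hx
      by_cases hpx : ∃ m' : ℕ, x = 2 ^ m'
      · rw [hfpow x hpx]; positivity
      · rw [hfother x hpx]; linarith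
    · -- the main interval position
      rw [if_neg (by omega)]
      have hieq : i = im := Fin.ext (by rw [h])
      rw [hieq]
      have hUeq : (⋃ (j : Fin (n + 2)) (_ : j < im), S (α j)) = ⋃ j ∈ P, S (α j) := by
        apply Set.iUnion_congr
        intro j
        have hjp : (j < im) = (j ∈ P) := by
          simp only [eq_iff_iff, hPmem, Fin.lt_def, himdef]
        rw [hjp]
      have hmeasU : ∀ j ∈ P, MeasurableSet (S (α j)) := by
        intro j hj
        rw [hSα j ((hPmem j).1 hj)]
        exact measurableSet_Ico
      have hdisj : (↑P : Set (Fin (n + 2))).PairwiseDisjoint (fun j => S (α j)) := by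
        intro a ha b hb hab
        have hav : (a : ℕ) < m := (hPmem a).1 (Finset.mem_coe.1 ha)
        have hbv : (b : ℕ) < m := (hPmem b).1 (Finset.mem_coe.1 hb)
        have hne : ((α a : Fin (n + 2)) : ℕ) ≠ ((α b : Fin (n + 2)) : ℕ) := by
          intro hcon
          exact hab (α.injective (Fin.ext hcon))
        simp only [Function.onFun]
        rw [hSα a hav, hSα b hbv]
        rw [Set.Ico_disjoint_Ico]
        rcases Nat.lt_or_ge ((α a : Fin (n + 2)) : ℕ) ((α b : Fin (n + 2)) : ℕ) with hlt | hge
        · calc min ((csum ℓ (((α a : Fin (n + 2)) : ℕ) + 1) : ℕ) : ℝ)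
                ((csum ℓ (((α b : Fin (n + 2)) : ℕ) + 1) : ℕ) : ℝ)
              ≤ ((csum ℓ (((α a : Fin (n + 2)) : ℕ) + 1) : ℕ) : ℝ) := min_le_left _ _
            _ ≤ ((csum ℓ ((α b : Fin (n + 2)) : ℕ) : ℕ) : ℝ) := by
                exact_mod_cast hcmono _ _ (by omega)
            _ ≤ max ((csum ℓ ((α a : Fin (n + 2)) : ℕ) : ℕ) : ℝ)
                ((csum ℓ ((α b : Fin (n + 2)) : ℕ) : ℕ) : ℝ) := le_max_right _ _
        · have hlt' : ((α b : Fin (n + 2)) : ℕ) < ((α a : Fin (n + 2)) : ℕ) := by omega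
          calc min ((csum ℓ (((α a : Fin (n + 2)) : ℕ) + 1) : ℕ) : ℝ)
                ((csum ℓ (((α b : Fin (n + 2)) : ℕ) + 1) : ℕ) : ℝ)
              ≤ ((csum ℓ (((α b : Fin (n + 2)) : ℕ) + 1) : ℕ) : ℝ) := min_le_right _ _
            _ ≤ ((csum ℓ ((α a : Fin (n + 2)) : ℕ) : ℕ) : ℝ) := by
                exact_mod_cast hcmono _ _ (by omega)
            _ ≤ max ((csum ℓ ((α a : Fin (n + 2)) : ℕ) : ℕ) : ℝ)
                ((csum ℓ ((α b : Fin (n + 2)) : ℕ) : ℕ) : ℝ) := le_max_left _ _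
      have hvolU : volume (⋃ j ∈ P, S (α j)) =
          ENNReal.ofReal (((2 ^ n * Q + m : ℕ) : ℝ)) := by
        rw [measure_biUnion_finset hdisj hmeasU]
        have hvj : ∀ j ∈ P, volume (S (α j)) =
            ENNReal.ofReal ((ℓ ((α j : Fin (n + 2)) : ℕ) : ℕ) : ℝ) := by
          intro j hj
          rw [hSα j ((hPmem j).1 hj), Real.volume_Ico]
          congr 1
          have := hcsucc ((α j : Fin (n + 2)) : ℕ)
          push_cast [this]; ring
        rw [Finset.sum_congr rfl hvj, ← ENNReal.ofReal_sum_of_nonneg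
          (fun j _ => Nat.cast_nonneg _)]
        congr 1
        rw [← Nat.cast_sum, hPsum, hsumC]
      have hUsub : (⋃ j ∈ P, S (α j)) ⊆ Set.Ico (0 : ℝ) M :=
        Set.iUnion₂_subset fun j _ => hSsub _
      have hUm : MeasurableSet (⋃ j ∈ P, S (α j)) :=
        P.measurableSet_biUnion hmeasU
      rw [hUeq, hSαim]
      rw [measure_diff hUsub hUm.nullMeasurableSet (by rw [hvolU]; exact ENNReal.ofReal_ne_top)]
      rw [hvolU, Real.volume_Ico, sub_zero, ← ENNReal.ofReal_sub _ (Nat.cast_nonneg _)]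
      have hval : M - ((2 ^ n * Q + m : ℕ) : ℝ) = (2 : ℝ) ^ N := by
        rw [hMdef]
        push_cast [hmdef, Nat.cast_sub hkn]
        ring
      rw [hval, ENNReal.toReal_ofReal (by positivity)]
      rw [hfpow _ ⟨N, rfl⟩]
    · -- positions after the main interval
      rw [if_neg (by omega)]
      have him : im < i := by rw [Fin.lt_def]; exact h
      have hsub : S (α i) \ (⋃ (j : Fin (n + 2)) (_ : j < i), S (α j)) ⊆ (∅ : Set ℝ) := by
        intro x hx
        exact hx.2 (Set.mem_iUnion₂.2 ⟨im, him, hSαim ▸ hSsub (α i) hx.1⟩)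
      have hvol0 : volume (S (α i) \ ⋃ (j : Fin (n + 2)) (_ : j < i), S (α j)) = 0 :=
        measure_mono_null hsub measure_empty
      rw [hvol0]
      simp [hf0]
  -- assemble
  have hcost : exposedCost S f α ≤
      ∑ i : Fin (n + 2), (if (i : ℕ) < m then ((ℓ ((α i : Fin (n + 2)) : ℕ) : ℕ) : ℝ) else 0) :=
    Finset.sum_le_sum (fun i _ => hbound i)
  have hsum2 : ∑ i : Fin (n + 2),
      (if (i : ℕ) < m then ((ℓ ((α i : Fin (n + 2)) : ℕ) : ℕ) : ℝ) else 0) =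
      ∑ j ∈ P, ((ℓ ((α j : Fin (n + 2)) : ℕ) : ℕ) : ℝ) := (Finset.sum_filter _ _).symm
  have hsum3 : ∑ j ∈ P, ((ℓ ((α j : Fin (n + 2)) : ℕ) : ℕ) : ℝ) = ((2 ^ n * Q + m : ℕ) : ℝ) := by
    rw [← Nat.cast_sum, hPsum, hsumC]
  calc exposedCost S f α ≤ _ := hcost
    _ = ((2 ^ n * Q + m : ℕ) : ℝ) := by rw [hsum2, hsum3]
    _ ≤ (2 : ℝ) ^ n * Q + ↑n - ↑k := by
        push_cast [hmdef, Nat.cast_sub hkn]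
        linarith
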